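/- Let C₀ ≥ 0, let T : ℝ → ℂ be differentiable with |T(k)| ≤ 1 for all k ∈ ℝ and |T(k)/k| + ⟨k⟩ |(d/dk)(T(k)/k)| ≤ C₀⟨k⟩^{−1} for all k ≠ 0, and let m : ℝ × ℝ → ℂ be continuous and differentiable in its second variable, with |m(x,k) − 1| ≤ C₀⟨x⟩⟨k⟩^{−1} and |∂_k m(x,k)| ≤ C₀⟨x⟩²⟨k⟩^{−1} for all x, k ∈ ℝ. Then there exists C depending only on C₀ such that for every differentiable g : ℝ → ℂ with g, g' ∈ L²(ℝ) and g(0) = 0, every t ≥ 0, and every x ∈ ℝ, | ∫₀^∞ ⟨k⟩^{−1} T(k) m(x,k) e^{ikx} e^{it⟨k⟩} g(k) dk | ≤ C ⟨x⟩² ⟨t⟩^{−1} ( ‖g‖_{L²} + ‖g'‖_{L²} ). -/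

import Mathlib

open MeasureTheory

open Filter Set Topology

/-- Japanese bracket `⟨x⟩ = √(1+x²)`. -/
noncomputable def jb (x : ℝ) : ℝ := Real.sqrt (1 + x ^ 2)

lemma jb_pos (x : ℝ) : 0 < jb x := Real.sqrt_pos.2 (by positivity)

lemma one_le_jb (x : ℝ) : 1 ≤ jb x := by
  rw [show (1:ℝ) = Real.sqrt 1 by simp]
  exact Real.sqrt_le_sqrt (by nlinarith [sq_nonneg x])

lemma jb_nonneg (x : ℝ) : 0 ≤ jb x := (jb_pos x).le

lemma jb_ne_zero (x : ℝ) : jb x ≠ 0 := (jb_pos x).ne'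

lemma sq_jb (x : ℝ) : jb x ^ 2 = 1 + x ^ 2 :=
  Real.sq_sqrt (by positivity)

lemma abs_le_jb (x : ℝ) : |x| ≤ jb x := by
  rw [← Real.sqrt_sq_eq_abs]
  exact Real.sqrt_le_sqrt (by nlinarith)

lemma le_jb (x : ℝ) : x ≤ jb x := (le_abs_self x).trans (abs_le_jb x)

lemma inv_jb_le_one (x : ℝ) : (jb x)⁻¹ ≤ 1 := by
  rw [inv_le_one_iff₀]; right; exact one_le_jb x

lemma continuous_jb : Continuous jb :=
  Real.continuous_sqrt.comp (by continuity)

lemma hasDerivAt_jb (k : ℝ) : HasDerivAt jb (k / jb k) k := by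
  have h1 : HasDerivAt (fun x : ℝ => 1 + x ^ 2) (2 * k) k := by
    simpa using (hasDerivAt_pow 2 k).const_add 1
  have := h1.sqrt (by positivity)
  convert this using 1
  unfold jb
  field_simp
  ring
  rfl

lemma tendsto_jb_atTop : Tendsto jb atTop atTop :=
  tendsto_atTop_mono le_jb tendsto_id

lemma mul_L2_integrable {f g : ℝ → ℝ} (hf : MemLp f 2 volume) (hg : MemLp g 2 volume) :
    Integrable (fun k => f k * g k) volume := by
  have hint : Integrable (fun k => f k ^ 2 + g k ^ 2) volume := by
    exact hf.integrable_sq.add hg.integrable_sq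
  refine Integrable.mono' hint (hf.1.mul hg.1) ?_
  refine Eventually.of_forall fun k => ?_
  have h1 := sq_nonneg (|f k| - |g k|)
  have h2 : ‖f k * g k‖ = |f k| * |g k| := by rw [Real.norm_eq_abs, abs_mul]
  nlinarith [sq_abs (f k), sq_abs (g k)]

lemma memL2_inv_jb : MemLp (fun k : ℝ => (jb k)⁻¹) 2 (volume : Measure ℝ) := by
  rw [memLp_two_iff_integrable_sq (f := fun k : ℝ => (jb k)⁻¹) (continuous_jb.inv₀ jb_ne_zero).aestronglyMeasurable]
  have : (fun k : ℝ => ((jb k)⁻¹) ^ 2) = fun k : ℝ => (1 + k ^ 2)⁻¹ := by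
    funext k; rw [← sq_jb k]; ring
  rw [this]
  exact integrable_inv_one_add_sq

lemma CS_integrable (f : ℝ → ℂ) (hf : MemLp f 2 volume) :
    Integrable (fun k => (jb k)⁻¹ * ‖f k‖) volume :=
  mul_L2_integrable memL2_inv_jb hf.norm

lemma CS_bound (f : ℝ → ℂ) (hf : MemLp f 2 volume) :
    ∫ k in Set.Ioi (0:ℝ), (jb k)⁻¹ * ‖f k‖ ≤
      Real.sqrt (∫ k : ℝ, (1 + k ^ 2)⁻¹) * Real.sqrt (∫ k : ℝ, ‖f k‖ ^ 2) := by
  have h22 : Real.HolderConjugate 2 2 := Real.HolderConjugate.two_two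
  have h2cast : (ENNReal.ofReal (2:ℝ)) = 2 := by norm_num
  have hjb2 : MemLp (fun k : ℝ => (jb k)⁻¹) (ENNReal.ofReal (2:ℝ))
      (volume.restrict (Set.Ioi 0)) := by
    rw [h2cast]; exact memL2_inv_jb.restrict _
  have hf2 : MemLp (fun k => ‖f k‖) (ENNReal.ofReal (2:ℝ)) (volume.restrict (Set.Ioi 0)) := by
    rw [h2cast]; exact (hf.norm).restrict _
  have H := MeasureTheory.integral_mul_norm_le_Lp_mul_Lq h22 hjb2 hf2
  have e1 : ∫ k in Set.Ioi (0:ℝ), (jb k)⁻¹ * ‖f k‖ =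
      ∫ k in Set.Ioi (0:ℝ), ‖(jb k)⁻¹‖ * ‖(‖f k‖)‖ := by
    refine integral_congr_ae (Eventually.of_forall fun k => ?_)
    simp [Real.norm_of_nonneg (inv_nonneg.2 (jb_nonneg k))]
  rw [e1]
  refine H.trans ?_
  have hs1 : (∫ k in Set.Ioi (0:ℝ), ‖(jb k)⁻¹‖ ^ (2:ℝ)) ^ (1/(2:ℝ)) ≤
      Real.sqrt (∫ k : ℝ, (1 + k ^ 2)⁻¹) := by
    rw [Real.sqrt_eq_rpow]
    refine Real.rpow_le_rpow (by positivity) ?_ (by norm_num)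
    have e2 : (fun k : ℝ => ‖(jb k)⁻¹‖ ^ (2:ℝ)) = fun k : ℝ => (1 + k ^ 2)⁻¹ := by
      funext k
      rw [Real.norm_of_nonneg (inv_nonneg.2 (jb_nonneg k)), Real.rpow_two, ← sq_jb k]
      ring
    rw [e2]
    exact setIntegral_le_integral integrable_inv_one_add_sq
      (Eventually.of_forall fun k => by positivity)
  have hs2 : (∫ k in Set.Ioi (0:ℝ), ‖(‖f k‖)‖ ^ (2:ℝ)) ^ (1/(2:ℝ)) ≤
      Real.sqrt (∫ k : ℝ, ‖f k‖ ^ 2) := by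
    rw [Real.sqrt_eq_rpow]
    refine Real.rpow_le_rpow (by positivity) ?_ (by norm_num)
    have e2 : (fun k : ℝ => ‖(‖f k‖)‖ ^ (2:ℝ)) = fun k : ℝ => ‖f k‖ ^ 2 := by
      funext k; rw [norm_norm, Real.rpow_two]
    rw [e2]
    exact setIntegral_le_integral hf.norm.integrable_sq
      (Eventually.of_forall fun k => by positivity)
  exact mul_le_mul hs1 hs2 (by positivity) (by positivity)

lemma exists_norm_tendsto (g : ℝ → ℂ) (hgd : ∀ k, DifferentiableAt ℝ g k)
    (hg2 : MemLp g 2 volume) (hg'2 : MemLp (deriv g) 2 volume) :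
    ∃ c, Tendsto (fun k => ‖g k‖) atTop (𝓝 c) := by
  set W : ℝ → ℂ := fun k => g k * star (g k) with hWdef
  set W' : ℝ → ℂ := fun k => deriv g k * star (g k) + g k * star (deriv g k) with hW'def
  have hW : ∀ k, HasDerivAt W (W' k) k := fun k =>
    ((hgd k).hasDerivAt.mul (hgd k).hasDerivAt.star)
  have hW'int : Integrable W' volume := by
    have hint : Integrable (fun k => ‖deriv g k‖ * ‖g k‖ + ‖g k‖ * ‖deriv g k‖) volume :=
      (mul_L2_integrable hg'2.norm hg2.norm).add (mul_L2_integrable hg2.norm hg'2.norm)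
    refine Integrable.mono' hint
      (((hg'2.1.mul (continuous_star.comp_aestronglyMeasurable hg2.1)).add
        (hg2.1.mul (continuous_star.comp_aestronglyMeasurable hg'2.1)))) ?_
    refine Eventually.of_forall fun k => ?_
    refine (norm_add_le _ _).trans ?_
    simp only [norm_mul, norm_star]
    exact le_refl _
  have hFTC : ∀ b : ℝ, W b = W 0 + ∫ k in (0:ℝ)..b, W' k := by
    intro b
    have := intervalIntegral.integral_eq_sub_of_hasDerivAt (a := 0) (b := b)
      (fun x _ => hW x) hW'int.intervalIntegrable
    rw [this]; ring
  have htt : Tendsto (fun b => ∫ k in (0:ℝ)..b, W' k) atTop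
      (𝓝 (∫ k in Set.Ioi (0:ℝ), W' k)) :=
    intervalIntegral_tendsto_integral_Ioi 0 hW'int.integrableOn tendsto_id
  have hWt : Tendsto W atTop (𝓝 (W 0 + ∫ k in Set.Ioi (0:ℝ), W' k)) := by
    have := (tendsto_const_nhds (x := W 0) (f := atTop)).add htt
    refine this.congr fun b => (hFTC b).symm
  have hre : Tendsto (fun k => ‖g k‖ ^ 2) atTop
      (𝓝 ((W 0 + ∫ k in Set.Ioi (0:ℝ), W' k).re)) := by
    have h1 := (Complex.continuous_re.tendsto _).comp hWt
    refine h1.congr fun k => ?_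
    simp only [Function.comp_apply, hWdef]
    rw [show (star (g k)) = (starRingEnd ℂ) (g k) from rfl, Complex.mul_conj]
    rw [Complex.normSq_eq_norm_sq, Complex.ofReal_re]
  refine ⟨Real.sqrt ((W 0 + ∫ k in Set.Ioi (0:ℝ), W' k).re), ?_⟩
  have := (Real.continuous_sqrt.tendsto _).comp hre
  refine this.congr fun k => ?_
  simp [Real.sqrt_sq (norm_nonneg (g k))]

lemma mul_le_mul₄ {a1 a2 a3 a4 b1 b2 b3 b4 : ℝ} (h1 : a1 ≤ b1) (h2 : a2 ≤ b2)
    (h3 : a3 ≤ b3) (h4 : a4 ≤ b4) (n1 : 0 ≤ a1) (n2 : 0 ≤ a2) (n3 : 0 ≤ a3)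
    (n4 : 0 ≤ a4) : a1 * a2 * a3 * a4 ≤ b1 * b2 * b3 * b4 :=
  mul_le_mul (mul_le_mul (mul_le_mul h1 h2 n2 (n1.trans h1)) h3 n3
    (mul_nonneg (n1.trans h1) (n2.trans h2))) h4 n4
    (mul_nonneg (mul_nonneg (n1.trans h1) (n2.trans h2)) (n3.trans h3))

lemma mul_le_mul₃ {a1 a2 a3 b1 b2 b3 : ℝ} (h1 : a1 ≤ b1) (h2 : a2 ≤ b2)
    (h3 : a3 ≤ b3) (n1 : 0 ≤ a1) (n2 : 0 ≤ a2) (n3 : 0 ≤ a3) :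
    a1 * a2 * a3 ≤ b1 * b2 * b3 :=
  mul_le_mul (mul_le_mul h1 h2 n2 (n1.trans h1)) h3 n3
    (mul_nonneg (n1.trans h1) (n2.trans h2))

set_option maxHeartbeats 1000000 in
/-- Half-line contribution to the weighted local decay estimate: for a
transmission coefficient `T` with `|T| ≤ 1`, `|T(k)/k| + ⟨k⟩|(T(k)/k)'| ≤ C₀⟨k⟩⁻¹`,
and a modified Jost function `m` with `|m−1| ≤ C₀⟨x⟩⟨k⟩⁻¹`, `|∂_k m| ≤ C₀⟨x⟩²⟨k⟩⁻¹`,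
one has `|∫₀^∞ ⟨k⟩⁻¹ T(k) m(x,k) e^{ikx} e^{it⟨k⟩} g(k) dk|
  ≤ C ⟨x⟩² ⟨t⟩⁻¹ (‖g‖_{L²} + ‖g'‖_{L²})` whenever `g(0) = 0`,
with `C` depending only on `C₀`. -/
theorem stmt16 (C₀ : ℝ) (hC₀ : 0 ≤ C₀) :
    ∃ C : ℝ, ∀ T : ℝ → ℂ,
      (∀ k : ℝ, DifferentiableAt ℝ T k) →
      (∀ k : ℝ, ‖T k‖ ≤ 1) →
      (∀ k : ℝ, k ≠ 0 →
        ‖T k / k‖ + jb k * ‖deriv (fun y : ℝ => T y / y) k‖ ≤ C₀ / jb k) →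
      ∀ m : ℝ → ℝ → ℂ, Continuous (Function.uncurry m) →
        (∀ x k : ℝ, DifferentiableAt ℝ (m x) k) →
        (∀ x k : ℝ, ‖m x k - 1‖ ≤ C₀ * jb x / jb k) →
        (∀ x k : ℝ, ‖deriv (m x) k‖ ≤ C₀ * jb x ^ 2 / jb k) →
        ∀ g : ℝ → ℂ, (∀ k : ℝ, DifferentiableAt ℝ g k) →
          MemLp g 2 volume → MemLp (deriv g) 2 volume → g 0 = 0 →
          ∀ t : ℝ, 0 ≤ t → ∀ x : ℝ,
            ‖∫ k in Set.Ioi (0 : ℝ), (((jb k)⁻¹ : ℝ) : ℂ) * T k * m x k *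
                Complex.exp (Complex.I * k * x) *
                Complex.exp (Complex.I * t * jb k) * g k‖
              ≤ C * jb x ^ 2 * (jb t)⁻¹ *
                (Real.sqrt (∫ k : ℝ, ‖g k‖ ^ 2) +
                  Real.sqrt (∫ k : ℝ, ‖deriv g k‖ ^ 2)) := by
  classical
  set M : ℝ := ∫ k : ℝ, (1 + k ^ 2)⁻¹ with hM
  have hM0 : 0 ≤ M := integral_nonneg fun k => by positivity
  refine ⟨Real.sqrt 2 * (3 * (C₀ + 1) ^ 2) * Real.sqrt M, ?_⟩
  intro T hTd hT1 hTk m hmc hmd hm1 hmd2 g hgd hg2 hg'2 hg0 t ht x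
  set A := Real.sqrt (∫ k : ℝ, ‖g k‖ ^ 2) with hA
  set B := Real.sqrt (∫ k : ℝ, ‖deriv g k‖ ^ 2) with hB
  have hA0 : 0 ≤ A := Real.sqrt_nonneg _
  have hB0 : 0 ≤ B := Real.sqrt_nonneg _
  set F : ℝ → ℂ := fun k => (((jb k)⁻¹ : ℝ) : ℂ) * T k * m x k *
      Complex.exp (Complex.I * k * x) * Complex.exp (Complex.I * t * jb k) * g k with hF
  -- norms of the oscillatory factors
  have hE1 : ∀ k : ℝ, ‖Complex.exp (Complex.I * k * x)‖ = 1 := by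
    intro k
    rw [Complex.norm_exp]
    norm_num [Complex.mul_re, Complex.mul_im]
  have hE2 : ∀ k : ℝ, ‖Complex.exp (Complex.I * t * jb k)‖ = 1 := by
    intro k
    rw [Complex.norm_exp]
    norm_num [Complex.mul_re, Complex.mul_im]
  -- bound on m
  have hmb : ∀ k : ℝ, ‖m x k‖ ≤ (C₀ + 1) * jb x := by
    intro k
    have h1 := hm1 x k
    have h2 : ‖m x k‖ ≤ ‖m x k - 1‖ + 1 := by
      calc ‖m x k‖ = ‖(m x k - 1) + 1‖ := by ring_nf
        _ ≤ ‖m x k - 1‖ + ‖(1 : ℂ)‖ := norm_add_le _ _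
        _ = ‖m x k - 1‖ + 1 := by simp
    have h3 : C₀ * jb x / jb k ≤ C₀ * jb x := by
      rw [div_le_iff₀ (jb_pos k)]
      nlinarith [one_le_jb k, jb_nonneg x, mul_nonneg hC₀ (jb_nonneg x)]
    nlinarith [one_le_jb x]
  have hmb2 : ∀ k : ℝ, ‖m x k‖ ≤ (C₀ + 1) * jb x ^ 2 := by
    intro k
    refine (hmb k).trans ?_
    nlinarith [mul_nonneg (jb_nonneg x) (sub_nonneg.mpr (one_le_jb x)), hC₀]
  -- pointwise bound on F
  have hFb : ∀ k : ℝ, ‖F k‖ ≤ ((C₀ + 1) * jb x) * ((jb k)⁻¹ * ‖g k‖) := by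
    intro k
    have hn : ‖(((jb k)⁻¹ : ℝ) : ℂ)‖ = (jb k)⁻¹ := by
      rw [Complex.norm_real, Real.norm_of_nonneg (inv_nonneg.2 (jb_nonneg k))]
    have hjk : (0:ℝ) ≤ (jb k)⁻¹ := inv_nonneg.2 (jb_nonneg k)
    calc ‖F k‖ = (jb k)⁻¹ * (‖T k‖ * ‖m x k‖) * ‖g k‖ := by
          rw [hF]
          simp only [norm_mul, hn, hE1 k, hE2 k]
          ring
      _ ≤ (jb k)⁻¹ * (1 * ((C₀ + 1) * jb x)) * ‖g k‖ := by
          refine mul_le_mul_of_nonneg_right (mul_le_mul_of_nonneg_left ?_ hjk)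
            (norm_nonneg _)
          exact mul_le_mul (hT1 k) (hmb k) (norm_nonneg _) zero_le_one
      _ = ((C₀ + 1) * jb x) * ((jb k)⁻¹ * ‖g k‖) := by ring
  -- continuity facts
  have hgc : Continuous g := by
    rw [continuous_iff_continuousAt]; exact fun k => (hgd k).continuousAt
  have hTc : Continuous T := by
    rw [continuous_iff_continuousAt]; exact fun k => (hTd k).continuousAt
  have hmxc : Continuous (m x) := by
    have h := hmc.comp (Continuous.prodMk_right x)
    exact h
  have c1 : Continuous fun k : ℝ => (((jb k)⁻¹ : ℝ) : ℂ) :=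
    Complex.continuous_ofReal.comp (continuous_jb.inv₀ jb_ne_zero)
  have c2 : Continuous fun k : ℝ => Complex.exp (Complex.I * k * x) :=
    Complex.continuous_exp.comp
      ((continuous_const.mul Complex.continuous_ofReal).mul continuous_const)
  have c3 : Continuous fun k : ℝ => Complex.exp (Complex.I * t * jb k) :=
    Complex.continuous_exp.comp
      (continuous_const.mul (Complex.continuous_ofReal.comp continuous_jb))
  have hFc : Continuous F := by
    rw [hF]
    exact ((((c1.mul hTc).mul hmxc).mul c2).mul c3).mul hgc
  have hdomF : Integrable (fun k : ℝ => ((C₀ + 1) * jb x) * ((jb k)⁻¹ * ‖g k‖))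
      volume := (CS_integrable g hg2).const_mul _
  have hFint : IntegrableOn F (Set.Ioi 0) volume := by
    refine Integrable.mono' hdomF.integrableOn
      hFc.aestronglyMeasurable.restrict ?_
    exact Filter.Eventually.of_forall fun k => hFb k
  have hCSg := CS_bound g hg2
  have hCSg' := CS_bound (deriv g) hg'2
  have hIb : ∫ k in Set.Ioi (0:ℝ), (jb k)⁻¹ * ‖g k‖ ≤ Real.sqrt M * A := hCSg
  have hIb' : ∫ k in Set.Ioi (0:ℝ), (jb k)⁻¹ * ‖deriv g k‖ ≤ Real.sqrt M * B := hCSg'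
  have hInn : (0:ℝ) ≤ ∫ k in Set.Ioi (0:ℝ), (jb k)⁻¹ * ‖g k‖ :=
    integral_nonneg fun k => mul_nonneg (inv_nonneg.2 (jb_nonneg k)) (norm_nonneg _)
  rcases le_total t 1 with htle | ht1
  · -- small time regime
    have hjbt : jb t ≤ Real.sqrt 2 := by
      rw [jb]
      exact Real.sqrt_le_sqrt (by nlinarith)
    have key : ‖∫ k in Set.Ioi (0:ℝ), F k‖ ≤ ((C₀ + 1) * jb x) * (Real.sqrt M * A) := by
      have h1 : ‖∫ k in Set.Ioi (0:ℝ), F k‖ ≤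
          ∫ k in Set.Ioi (0:ℝ), ((C₀ + 1) * jb x) * ((jb k)⁻¹ * ‖g k‖) :=
        norm_integral_le_of_norm_le hdomF.integrableOn
          (Filter.Eventually.of_forall fun k => hFb k)
      have h2 : ∫ k in Set.Ioi (0:ℝ), ((C₀ + 1) * jb x) * ((jb k)⁻¹ * ‖g k‖) =
          ((C₀ + 1) * jb x) * ∫ k in Set.Ioi (0:ℝ), (jb k)⁻¹ * ‖g k‖ :=
        integral_const_mul _ _
      rw [h2] at h1
      refine h1.trans (mul_le_mul_of_nonneg_left hIb ?_)
      have := one_le_jb x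
      nlinarith
    have h3 : (1:ℝ) ≤ Real.sqrt 2 * (jb t)⁻¹ := by
      have h2 : (0:ℝ) < Real.sqrt 2 := Real.sqrt_pos.2 two_pos
      have hinv : (Real.sqrt 2)⁻¹ ≤ (jb t)⁻¹ := by
        apply inv_anti₀ (jb_pos t) hjbt
      calc (1:ℝ) = Real.sqrt 2 * (Real.sqrt 2)⁻¹ := (mul_inv_cancel₀ h2.ne').symm
        _ ≤ Real.sqrt 2 * (jb t)⁻¹ := mul_le_mul_of_nonneg_left hinv h2.le
    refine key.trans ?_
    calc ((C₀ + 1) * jb x) * (Real.sqrt M * A)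
        = (C₀ + 1) * jb x * 1 * (Real.sqrt M * A) := by ring
      _ ≤ (3 * (C₀ + 1) ^ 2) * jb x ^ 2 * (Real.sqrt 2 * (jb t)⁻¹) *
            (Real.sqrt M * (A + B)) := by
          refine mul_le_mul₄ (by nlinarith) (by nlinarith [one_le_jb x]) h3
            (mul_le_mul_of_nonneg_left (by linarith) (Real.sqrt_nonneg M))
            (by linarith) (jb_nonneg x) zero_le_one
            (mul_nonneg (Real.sqrt_nonneg M) hA0)
      _ = Real.sqrt 2 * (3 * (C₀ + 1) ^ 2) * Real.sqrt M * jb x ^ 2 * (jb t)⁻¹ *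
            (A + B) := by ring
  · -- large time regime: integration by parts
    have ht0 : (0:ℝ) < t := lt_of_lt_of_le one_pos ht1
    have htinv0 : (0:ℝ) ≤ t⁻¹ := inv_nonneg.2 ht0.le
    have hIt : (Complex.I * (t:ℂ)) ≠ 0 :=
      mul_ne_zero Complex.I_ne_zero (by exact_mod_cast ht0.ne')
    have hItn : ‖(Complex.I * (t:ℂ))⁻¹‖ = t⁻¹ := by
      rw [norm_inv, norm_mul, Complex.norm_I, one_mul, Complex.norm_real,
        Real.norm_of_nonneg ht0.le]
    set q : ℝ → ℂ := fun y => T y / (y:ℂ) with hq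
    -- bounds on q and its derivative
    have hqb : ∀ k : ℝ, k ≠ 0 → ‖q k‖ ≤ (C₀ + 1) * (jb k)⁻¹ := by
      intro k hk0
      have h := hTk k hk0
      have h2 : (0:ℝ) ≤ jb k * ‖deriv (fun y : ℝ => T y / (y:ℂ)) k‖ :=
        mul_nonneg (jb_nonneg k) (norm_nonneg _)
      have h3 : ‖q k‖ ≤ C₀ / jb k := by
        have : ‖T k / (k:ℂ)‖ ≤ C₀ / jb k := by linarith
        simpa [hq] using this
      refine h3.trans ?_
      rw [div_eq_mul_inv]
      exact mul_le_mul_of_nonneg_right (by linarith) (inv_nonneg.2 (jb_nonneg k))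
    have hq'b : ∀ k : ℝ, k ≠ 0 → ‖deriv q k‖ ≤ (C₀ + 1) * (jb k)⁻¹ := by
      intro k hk0
      have h := hTk k hk0
      have h1 : (0:ℝ) ≤ ‖T k / (k:ℂ)‖ := norm_nonneg _
      have h2 : ‖deriv q k‖ ≤ jb k * ‖deriv q k‖ :=
        le_mul_of_one_le_left (norm_nonneg _) (one_le_jb k)
      have h3 : ‖deriv q k‖ ≤ C₀ / jb k := by
        refine h2.trans ?_
        simp only [hq] at h ⊢
        linarith
      refine h3.trans ?_
      rw [div_eq_mul_inv]
      exact mul_le_mul_of_nonneg_right (by linarith) (inv_nonneg.2 (jb_nonneg k))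
    have hm'b : ∀ k : ℝ, ‖deriv (m x) k‖ ≤ (C₀ + 1) * jb x ^ 2 := by
      intro k
      refine (hmd2 x k).trans ?_
      refine (div_le_self (by positivity) (one_le_jb k)).trans ?_
      nlinarith [sq_nonneg (jb x)]
    -- the integrated-by-parts integrand
    set D : ℝ → ℂ := fun k => (Complex.I * (t:ℂ))⁻¹ *
        (deriv q k * m x k * Complex.exp (Complex.I * k * x) *
            Complex.exp (Complex.I * t * jb k) * g k
          + q k * deriv (m x) k * Complex.exp (Complex.I * k * x) *
            Complex.exp (Complex.I * t * jb k) * g k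
          + q k * m x k * (Complex.I * (x:ℂ) * Complex.exp (Complex.I * k * x)) *
            Complex.exp (Complex.I * t * jb k) * g k
          + q k * m x k * Complex.exp (Complex.I * k * x) *
            Complex.exp (Complex.I * t * jb k) * deriv g k) with hD
    set G : ℝ → ℂ := fun k => (Complex.I * (t:ℂ))⁻¹ *
        (q k * m x k * Complex.exp (Complex.I * k * x) *
          Complex.exp (Complex.I * t * jb k) * g k) with hG
    -- pointwise bound for D
    have hDb : ∀ k ∈ Set.Ioi (0:ℝ), ‖D k‖ ≤ (3 * (C₀ + 1) ^ 2 * jb x ^ 2 * t⁻¹) *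
        ((jb k)⁻¹ * ‖g k‖ + (jb k)⁻¹ * ‖deriv g k‖) := by
      intro k hk
      have hk0 : k ≠ 0 := ne_of_gt hk
      have hjk : (0:ℝ) ≤ (jb k)⁻¹ := inv_nonneg.2 (jb_nonneg k)
      have e1n := hE1 k
      have e2n := hE2 k
      have b1 : ‖deriv q k * m x k * Complex.exp (Complex.I * k * x) *
          Complex.exp (Complex.I * t * jb k) * g k‖ ≤
          (C₀ + 1) ^ 2 * jb x ^ 2 * ((jb k)⁻¹ * ‖g k‖) := by
        calc ‖deriv q k * m x k * Complex.exp (Complex.I * k * x) *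
            Complex.exp (Complex.I * t * jb k) * g k‖
            = ‖deriv q k‖ * ‖m x k‖ * ‖g k‖ := by
              simp only [norm_mul, e1n, e2n]; ring
          _ ≤ ((C₀ + 1) * (jb k)⁻¹) * ((C₀ + 1) * jb x ^ 2) * ‖g k‖ :=
              mul_le_mul₃ (hq'b k hk0) (hmb2 k) le_rfl (norm_nonneg _)
                (norm_nonneg _) (norm_nonneg _)
          _ = (C₀ + 1) ^ 2 * jb x ^ 2 * ((jb k)⁻¹ * ‖g k‖) := by ring
      have b2 : ‖q k * deriv (m x) k * Complex.exp (Complex.I * k * x) *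
          Complex.exp (Complex.I * t * jb k) * g k‖ ≤
          (C₀ + 1) ^ 2 * jb x ^ 2 * ((jb k)⁻¹ * ‖g k‖) := by
        calc ‖q k * deriv (m x) k * Complex.exp (Complex.I * k * x) *
            Complex.exp (Complex.I * t * jb k) * g k‖
            = ‖q k‖ * ‖deriv (m x) k‖ * ‖g k‖ := by
              simp only [norm_mul, e1n, e2n]; ring
          _ ≤ ((C₀ + 1) * (jb k)⁻¹) * ((C₀ + 1) * jb x ^ 2) * ‖g k‖ :=
              mul_le_mul₃ (hqb k hk0) (hm'b k) le_rfl (norm_nonneg _)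
                (norm_nonneg _) (norm_nonneg _)
          _ = (C₀ + 1) ^ 2 * jb x ^ 2 * ((jb k)⁻¹ * ‖g k‖) := by ring
      have b3 : ‖q k * m x k * (Complex.I * (x:ℂ) * Complex.exp (Complex.I * k * x)) *
          Complex.exp (Complex.I * t * jb k) * g k‖ ≤
          (C₀ + 1) ^ 2 * jb x ^ 2 * ((jb k)⁻¹ * ‖g k‖) := by
        calc ‖q k * m x k * (Complex.I * (x:ℂ) * Complex.exp (Complex.I * k * x)) *
            Complex.exp (Complex.I * t * jb k) * g k‖
            = ‖q k‖ * ‖m x k‖ * |x| * ‖g k‖ := by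
              simp only [norm_mul, e1n, e2n, Complex.norm_I, Complex.norm_real,
                Real.norm_eq_abs]
              ring
          _ ≤ ((C₀ + 1) * (jb k)⁻¹) * ((C₀ + 1) * jb x) * jb x * ‖g k‖ :=
              mul_le_mul₄ (hqb k hk0) (hmb k) (abs_le_jb x) le_rfl (norm_nonneg _)
                (norm_nonneg _) (abs_nonneg _) (norm_nonneg _)
          _ = (C₀ + 1) ^ 2 * jb x ^ 2 * ((jb k)⁻¹ * ‖g k‖) := by ring
      have b4 : ‖q k * m x k * Complex.exp (Complex.I * k * x) *
          Complex.exp (Complex.I * t * jb k) * deriv g k‖ ≤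
          (C₀ + 1) ^ 2 * jb x ^ 2 * ((jb k)⁻¹ * ‖deriv g k‖) := by
        calc ‖q k * m x k * Complex.exp (Complex.I * k * x) *
            Complex.exp (Complex.I * t * jb k) * deriv g k‖
            = ‖q k‖ * ‖m x k‖ * ‖deriv g k‖ := by
              simp only [norm_mul, e1n, e2n]; ring
          _ ≤ ((C₀ + 1) * (jb k)⁻¹) * ((C₀ + 1) * jb x ^ 2) * ‖deriv g k‖ :=
              mul_le_mul₃ (hqb k hk0) (hmb2 k) le_rfl (norm_nonneg _)
                (norm_nonneg _) (norm_nonneg _)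
          _ = (C₀ + 1) ^ 2 * jb x ^ 2 * ((jb k)⁻¹ * ‖deriv g k‖) := by ring
      have hsum : ‖D k‖ ≤ t⁻¹ *
          ((C₀ + 1) ^ 2 * jb x ^ 2 * ((jb k)⁻¹ * ‖g k‖) +
            (C₀ + 1) ^ 2 * jb x ^ 2 * ((jb k)⁻¹ * ‖g k‖) +
            (C₀ + 1) ^ 2 * jb x ^ 2 * ((jb k)⁻¹ * ‖g k‖) +
            (C₀ + 1) ^ 2 * jb x ^ 2 * ((jb k)⁻¹ * ‖deriv g k‖)) := by
        rw [hD]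
        simp only [norm_mul, hItn]
        refine mul_le_mul_of_nonneg_left ?_ htinv0
        refine (norm_add_le _ _).trans ?_
        refine le_trans (add_le_add_left (norm_add_le _ _) _) ?_
        refine le_trans (add_le_add_left (add_le_add_left (norm_add_le _ _) _) _) ?_
        exact add_le_add (add_le_add (add_le_add b1 b2) b3) b4
      refine hsum.trans ?_
      have hX : (0:ℝ) ≤ (C₀ + 1) ^ 2 * jb x ^ 2 :=
        mul_nonneg (sq_nonneg _) (sq_nonneg _)
      have ha : (0:ℝ) ≤ (jb k)⁻¹ * ‖g k‖ := mul_nonneg hjk (norm_nonneg _)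
      have hb : (0:ℝ) ≤ (jb k)⁻¹ * ‖deriv g k‖ := mul_nonneg hjk (norm_nonneg _)
      have hkey : (3 * (C₀ + 1) ^ 2 * jb x ^ 2 * t⁻¹) *
            ((jb k)⁻¹ * ‖g k‖ + (jb k)⁻¹ * ‖deriv g k‖) =
          t⁻¹ * ((C₀ + 1) ^ 2 * jb x ^ 2 * ((jb k)⁻¹ * ‖g k‖) +
            (C₀ + 1) ^ 2 * jb x ^ 2 * ((jb k)⁻¹ * ‖g k‖) +
            (C₀ + 1) ^ 2 * jb x ^ 2 * ((jb k)⁻¹ * ‖g k‖) +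
            (C₀ + 1) ^ 2 * jb x ^ 2 * ((jb k)⁻¹ * ‖deriv g k‖)) +
          2 * (t⁻¹ * ((C₀ + 1) ^ 2 * jb x ^ 2) * ((jb k)⁻¹ * ‖deriv g k‖)) := by
        ring
      have hnn : (0:ℝ) ≤ t⁻¹ * ((C₀ + 1) ^ 2 * jb x ^ 2) * ((jb k)⁻¹ * ‖deriv g k‖) :=
        mul_nonneg (mul_nonneg htinv0 hX) hb
      linarith
    -- measurability of D
    have hDmeas : AEStronglyMeasurable D (volume.restrict (Set.Ioi 0)) := by
      have mq : Measurable q := by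
        rw [hq]; exact hTc.measurable.div Complex.measurable_ofReal
      have mq' : Measurable (deriv q) := measurable_deriv q
      have mm' : Measurable (deriv (m x)) := measurable_deriv (m x)
      have mg' : Measurable (deriv g) := measurable_deriv g
      have mD : Measurable D := by
        rw [hD]
        refine Measurable.const_mul ?_ _
        refine Measurable.add (Measurable.add (Measurable.add ?_ ?_) ?_) ?_
        · exact ((((mq'.mul hmxc.measurable).mul c2.measurable).mul
            c3.measurable).mul hgc.measurable)
        · exact ((((mq.mul mm').mul c2.measurable).mul c3.measurable).mul
            hgc.measurable)
        · exact ((((mq.mul hmxc.measurable).mul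
            (c2.measurable.const_mul _)).mul c3.measurable).mul hgc.measurable)
        · exact ((((mq.mul hmxc.measurable).mul c2.measurable).mul
            c3.measurable).mul mg')
      exact mD.aestronglyMeasurable
    -- integrability of D
    have hdomD : Integrable (fun k : ℝ => (3 * (C₀ + 1) ^ 2 * jb x ^ 2 * t⁻¹) *
        ((jb k)⁻¹ * ‖g k‖ + (jb k)⁻¹ * ‖deriv g k‖)) volume :=
      ((CS_integrable g hg2).add (CS_integrable (deriv g) hg'2)).const_mul _
    have hDint : IntegrableOn D (Set.Ioi 0) volume := by
      refine Integrable.mono' hdomD.integrableOn hDmeas ?_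
      rw [MeasureTheory.ae_restrict_iff' measurableSet_Ioi]
      exact Filter.Eventually.of_forall fun k hk => hDb k hk
    -- the derivative identity
    have hderiv : ∀ k ∈ Set.Ioi (0:ℝ), HasDerivAt G (D k + F k) k := by
      intro k hk
      have hk0 : k ≠ 0 := ne_of_gt hk
      have hkC : (k:ℂ) ≠ 0 := Complex.ofReal_ne_zero.mpr hk0
      have hjbC : ((jb k : ℝ):ℂ) ≠ 0 := Complex.ofReal_ne_zero.mpr (jb_ne_zero k)
      have hidc : HasDerivAt (fun y : ℝ => (y:ℂ)) 1 k := by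
        simpa using (hasDerivAt_id k).ofReal_comp
      have hqd : HasDerivAt q (deriv q k) k := by
        have : DifferentiableAt ℝ q k := by
          rw [hq]
          exact (hTd k).div hidc.differentiableAt hkC
        exact this.hasDerivAt
      have hmdk : HasDerivAt (m x) (deriv (m x) k) k := (hmd x k).hasDerivAt
      have he1 : HasDerivAt (fun y : ℝ => Complex.exp (Complex.I * y * x))
          (Complex.I * (x:ℂ) * Complex.exp (Complex.I * k * x)) k := by
        have inner : HasDerivAt (fun y : ℝ => Complex.I * (y:ℂ) * (x:ℂ))
            (Complex.I * (x:ℂ)) k := by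
          simpa using (hidc.const_mul Complex.I).mul_const (x:ℂ)
        simpa [mul_comm] using inner.cexp
      have he2 : HasDerivAt (fun y : ℝ => Complex.exp (Complex.I * t * jb y))
          (Complex.exp (Complex.I * t * jb k) *
            (Complex.I * (t:ℂ) * ((k / jb k : ℝ):ℂ))) k := by
        have hj : HasDerivAt (fun y : ℝ => ((jb y : ℝ):ℂ)) ((k / jb k : ℝ):ℂ) k :=
          (hasDerivAt_jb k).ofReal_comp
        have inner : HasDerivAt (fun y : ℝ => Complex.I * (t:ℂ) * ((jb y : ℝ):ℂ))
            (Complex.I * (t:ℂ) * ((k / jb k : ℝ):ℂ)) k := by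
          simpa [mul_assoc] using hj.const_mul (Complex.I * (t:ℂ))
        simpa using inner.cexp
      have hgdk : HasDerivAt g (deriv g k) k := (hgd k).hasDerivAt
      have hchain := ((((hqd.mul hmdk).mul he1).mul he2).mul hgdk).const_mul
        ((Complex.I * (t:ℂ))⁻¹)
      have hTq : T k = q k * (k:ℂ) := by
        rw [hq]; field_simp
      have key : ∀ a b c : ℂ, a + Complex.I * (t:ℂ) * b = c →
          (Complex.I * (t:ℂ))⁻¹ * a + b = (Complex.I * (t:ℂ))⁻¹ * c := by
        intro a b c h
        rw [← h, mul_add]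
        congr 1
        rw [inv_mul_cancel_left₀ hIt]
      refine HasDerivAt.congr_deriv hchain (Eq.symm ?_)
      rw [hD, hF]
      simp only [Pi.mul_apply]
      refine key _ _ _ ?_
      rw [hTq]
      push_cast
      ring
    -- boundary value
    have hG0 : G 0 = 0 := by
      rw [hG]
      simp [hq, hg0]
    -- continuity at 0 from the right
    have hGb : ∀ k : ℝ, ‖G k‖ ≤ (t⁻¹ * ((C₀ + 1) * ((C₀ + 1) * jb x))) *
        ((jb k)⁻¹ * ‖g k‖) := by
      intro k
      rcases eq_or_ne k 0 with rfl | hk0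
      · rw [hG]
        simp only [hq]
        rw [hg0]
        simp only [mul_zero, norm_zero]
        positivity
      · have hjk : (0:ℝ) ≤ (jb k)⁻¹ := inv_nonneg.2 (jb_nonneg k)
        calc ‖G k‖ = t⁻¹ * (‖q k‖ * ‖m x k‖ * ‖g k‖) := by
              rw [hG]
              simp only [norm_mul, hItn, hE1 k, hE2 k]
              ring
          _ ≤ t⁻¹ * (((C₀ + 1) * (jb k)⁻¹) * ((C₀ + 1) * jb x) * ‖g k‖) := by
              refine mul_le_mul_of_nonneg_left ?_ htinv0
              exact mul_le_mul₃ (hqb k hk0) (hmb k) le_rfl (norm_nonneg _)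
                (norm_nonneg _) (norm_nonneg _)
          _ = (t⁻¹ * ((C₀ + 1) * ((C₀ + 1) * jb x))) * ((jb k)⁻¹ * ‖g k‖) := by ring
    have hGcont : ContinuousWithinAt G (Set.Ici 0) 0 := by
      show Filter.Tendsto G (nhdsWithin 0 (Set.Ici 0)) (𝓝 (G 0))
      rw [hG0]
      have hlim : Filter.Tendsto (fun k : ℝ => (t⁻¹ * ((C₀ + 1) * ((C₀ + 1) * jb x))) *
          ((jb k)⁻¹ * ‖g k‖)) (nhdsWithin 0 (Set.Ici 0)) (𝓝 0) := by
        have hc : Continuous fun k : ℝ => (t⁻¹ * ((C₀ + 1) * ((C₀ + 1) * jb x))) *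
            ((jb k)⁻¹ * ‖g k‖) :=
          continuous_const.mul ((continuous_jb.inv₀ jb_ne_zero).mul hgc.norm)
        have h0 : (t⁻¹ * ((C₀ + 1) * ((C₀ + 1) * jb x))) * ((jb 0)⁻¹ * ‖g 0‖) = 0 := by
          rw [hg0]; simp
        have := (hc.tendsto 0).mono_left (nhdsWithin_le_nhds (s := Set.Ici 0))
        rwa [h0] at this
      exact squeeze_zero_norm' (Filter.Eventually.of_forall fun k => hGb k) hlim
    -- decay at infinity
    have hGtop : Filter.Tendsto G Filter.atTop (𝓝 0) := by
      obtain ⟨c, hc⟩ := exists_norm_tendsto g hgd hg2 hg'2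
      have hjinv : Filter.Tendsto (fun k : ℝ => (jb k)⁻¹) Filter.atTop (𝓝 0) :=
        tendsto_inv_atTop_zero.comp tendsto_jb_atTop
      have hlim : Filter.Tendsto (fun k : ℝ => (t⁻¹ * ((C₀ + 1) * ((C₀ + 1) * jb x))) *
          ((jb k)⁻¹ * ‖g k‖)) Filter.atTop (𝓝 0) := by
        have := (hjinv.mul hc).const_mul (t⁻¹ * ((C₀ + 1) * ((C₀ + 1) * jb x)))
        simpa using this
      exact squeeze_zero_norm' (Filter.Eventually.of_forall fun k => hGb k) hlim
    -- FTC on the half line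
    have hFTC : ∫ k in Set.Ioi (0:ℝ), (D k + F k) = 0 - G 0 :=
      MeasureTheory.integral_Ioi_of_hasDerivAt_of_tendsto hGcont hderiv
        (hDint.add hFint) hGtop
    rw [hG0, sub_zero] at hFTC
    have hsplit : (∫ k in Set.Ioi (0:ℝ), D k) + ∫ k in Set.Ioi (0:ℝ), F k = 0 := by
      rw [← integral_add hDint hFint]
      exact hFTC
    have hFD : ‖∫ k in Set.Ioi (0:ℝ), F k‖ = ‖∫ k in Set.Ioi (0:ℝ), D k‖ := by
      have : (∫ k in Set.Ioi (0:ℝ), F k) = -∫ k in Set.Ioi (0:ℝ), D k := by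
        linear_combination hsplit
      rw [this, norm_neg]
    rw [hFD]
    have hDn : ‖∫ k in Set.Ioi (0:ℝ), D k‖ ≤ (3 * (C₀ + 1) ^ 2 * jb x ^ 2 * t⁻¹) *
        (Real.sqrt M * A + Real.sqrt M * B) := by
      have h1 : ‖∫ k in Set.Ioi (0:ℝ), D k‖ ≤
          ∫ k in Set.Ioi (0:ℝ), (3 * (C₀ + 1) ^ 2 * jb x ^ 2 * t⁻¹) *
            ((jb k)⁻¹ * ‖g k‖ + (jb k)⁻¹ * ‖deriv g k‖) := by
        refine norm_integral_le_of_norm_le hdomD.integrableOn ?_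
        rw [MeasureTheory.ae_restrict_iff' measurableSet_Ioi]
        exact Filter.Eventually.of_forall fun k hk => hDb k hk
      have h2 : ∫ k in Set.Ioi (0:ℝ), (3 * (C₀ + 1) ^ 2 * jb x ^ 2 * t⁻¹) *
            ((jb k)⁻¹ * ‖g k‖ + (jb k)⁻¹ * ‖deriv g k‖) =
          (3 * (C₀ + 1) ^ 2 * jb x ^ 2 * t⁻¹) *
            ((∫ k in Set.Ioi (0:ℝ), (jb k)⁻¹ * ‖g k‖) +
              ∫ k in Set.Ioi (0:ℝ), (jb k)⁻¹ * ‖deriv g k‖) := by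
        rw [integral_const_mul, integral_add (CS_integrable g hg2).integrableOn
          (CS_integrable (deriv g) hg'2).integrableOn]
      rw [h2] at h1
      refine h1.trans (mul_le_mul_of_nonneg_left ?_ ?_)
      · exact add_le_add hIb hIb'
      · have := sq_nonneg (jb x)
        positivity
    refine hDn.trans ?_
    -- final constant comparison
    have hjbt2 : jb t ≤ Real.sqrt 2 * t := by
      have h1 : jb t ≤ Real.sqrt (2 * t ^ 2) := by
        rw [jb]
        exact Real.sqrt_le_sqrt (by nlinarith)
      rwa [Real.sqrt_mul (by norm_num) (t ^ 2), Real.sqrt_sq ht0.le] at h1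
    have htinv : t⁻¹ ≤ Real.sqrt 2 * (jb t)⁻¹ := by
      have h2 : t⁻¹ * jb t ≤ t⁻¹ * (Real.sqrt 2 * t) :=
        mul_le_mul_of_nonneg_left hjbt2 htinv0
      have h3 : t⁻¹ * (Real.sqrt 2 * t) = Real.sqrt 2 := by
        field_simp
      calc t⁻¹ = (t⁻¹ * jb t) * (jb t)⁻¹ := by
            field_simp
            rw [div_self (jb_ne_zero t)]
        _ ≤ Real.sqrt 2 * (jb t)⁻¹ := by
            refine mul_le_mul_of_nonneg_right ?_ (inv_nonneg.2 (jb_nonneg t))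
            rw [← h3]
            exact h2
    calc (3 * (C₀ + 1) ^ 2 * jb x ^ 2 * t⁻¹) * (Real.sqrt M * A + Real.sqrt M * B)
        = (3 * (C₀ + 1) ^ 2) * jb x ^ 2 * t⁻¹ * (Real.sqrt M * (A + B)) := by ring
      _ ≤ (3 * (C₀ + 1) ^ 2) * jb x ^ 2 * (Real.sqrt 2 * (jb t)⁻¹) *
            (Real.sqrt M * (A + B)) := by
          refine mul_le_mul_of_nonneg_right (mul_le_mul_of_nonneg_left htinv ?_) ?_
          · positivity
          · exact mul_nonneg (Real.sqrt_nonneg M) (by linarith)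
      _ = Real.sqrt 2 * (3 * (C₀ + 1) ^ 2) * Real.sqrt M * jb x ^ 2 * (jb t)⁻¹ *
            (A + B) := by ring
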